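/- The number of closed paths (i_1,...,i_k) with indices in Z/kZ, values in positive integers, satisfying |i_j - i_{j+1}| = 1 for all j and passing through the value 1, equals the central binomial coefficient C(k, k/2) when k is even (and 0 when k is odd). -/

import Mathlib

open Finset

namespace ClosedPathsAux

variable {k : ℕ} [NeZero k]

/-- A function on `ZMod k` invariant under `+1` is constant. -/
lemma const_of_step (g : ZMod k → ℤ) (h : ∀ j, g (j + 1) = g j) (j : ZMod k) : g j = g 0 := by
  have H : ∀ n : ℕ, g (n : ZMod k) = g 0 := by
    intro n
    induction n with
    | zero => simp
    | succ n ih =>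
      have : ((n + 1 : ℕ) : ZMod k) = (n : ZMod k) + 1 := by push_cast; ring
      rw [this, h, ih]
  have := H j.val
  rwa [ZMod.natCast_rightInverse j] at this

lemma sum_range_eq (g : ZMod k → ℤ) :
    ∑ m ∈ Finset.range k, g (m : ZMod k) = ∑ j : ZMod k, g j := by
  refine Finset.sum_nbij' (fun m => (m : ZMod k)) (fun j => j.val) ?_ ?_ ?_ ?_ ?_
  · intro a _; exact mem_univ _
  · intro j _; simpa using j.val_lt
  · intro m hm; exact ZMod.val_cast_of_lt (mem_range.mp hm)
  · intro j _; exact ZMod.natCast_rightInverse j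
  · intro a _; rfl

lemma sum_diff_zero (i : ZMod k → ℕ) :
    ∑ j : ZMod k, ((i (j + 1) : ℤ) - i j) = 0 := by
  have h := Fintype.sum_equiv (Equiv.addRight (1 : ZMod k))
    (fun j => (i (j + 1) : ℤ)) (fun j => (i j : ℤ)) (fun j => rfl)
  rw [Finset.sum_sub_distrib]
  rw [h]
  ring

lemma diff_eq (i : ZMod k → ℕ) (hs : ∀ j, ((i j : ℤ) - i (j + 1)).natAbs = 1) (j : ZMod k) :
    ((i (j + 1) : ℤ) - i j) = if i j < i (j + 1) then 1 else -1 := by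
  have h := hs j
  rcases Int.natAbs_eq_iff.mp h with h' | h'
  · rw [if_neg]
    · omega
    · omega
  · rw [if_pos]
    · omega
    · omega

lemma two_mul_card (i : ZMod k → ℕ) (hs : ∀ j, ((i j : ℤ) - i (j + 1)).natAbs = 1) :
    2 * (univ.filter (fun j => i j < i (j + 1))).card = k := by
  have h0 := sum_diff_zero i
  have heq : ∑ j : ZMod k, ((i (j + 1) : ℤ) - i j)
      = ∑ j : ZMod k, (if i j < i (j + 1) then (1 : ℤ) else -1) := by
    exact Finset.sum_congr rfl fun j _ => diff_eq i hs j
  rw [heq, Finset.sum_ite, Finset.sum_const, Finset.sum_const] at h0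
  have hb : (univ.filter (fun j => ¬ i j < i (j + 1))).card
      = k - (univ.filter (fun j => i j < i (j + 1))).card := by
    rw [Finset.filter_not, Finset.card_sdiff_of_subset (Finset.filter_subset _ _),
      Finset.card_univ, ZMod.card]
  have hle : (univ.filter (fun j => i j < i (j + 1))).card ≤ k := by
    calc (univ.filter (fun j => i j < i (j + 1))).card ≤ (univ : Finset (ZMod k)).card :=
          Finset.card_le_card (Finset.filter_subset _ _)
      _ = k := by rw [Finset.card_univ, ZMod.card]
  rw [hb] at h0
  simp only [nsmul_eq_mul, mul_one, mul_neg] at h0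
  omega

/-- Injectivity: two paths with the same up-step set are equal. -/
lemma path_eq (i i' : ZMod k → ℕ)
    (h1 : ∀ j, 1 ≤ i j) (hs : ∀ j, ((i j : ℤ) - i (j + 1)).natAbs = 1) (he : ∃ j, i j = 1)
    (h1' : ∀ j, 1 ≤ i' j) (hs' : ∀ j, ((i' j : ℤ) - i' (j + 1)).natAbs = 1) (he' : ∃ j, i' j = 1)
    (hf : ∀ j, i j < i (j + 1) ↔ i' j < i' (j + 1)) : i = i' := by
  set d : ZMod k → ℤ := fun j => (i j : ℤ) - i' j with hd
  have hstep : ∀ j, d (j + 1) = d j := by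
    intro j
    have e1 := diff_eq i hs j
    have e2 := diff_eq i' hs' j
    simp only [hf j] at e1
    simp only [hd]
    by_cases hc : i' j < i' (j + 1) <;> simp [hc] at e1 e2 <;> omega
  obtain ⟨j0, hj0⟩ := he
  obtain ⟨j1, hj1⟩ := he'
  have c0 : d j0 = d 0 := const_of_step d hstep j0
  have c1 : d j1 = d 0 := const_of_step d hstep j1
  have hle : d j0 ≤ 0 := by have := h1' j0; simp [hd, hj0]; omega
  have hge : 0 ≤ d j1 := by have := h1 j1; simp [hd, hj1]; omega
  have hzero : d 0 = 0 := by omega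
  funext j
  have := const_of_step d hstep j
  rw [hzero] at this
  simp only [hd] at this
  omega

/-! ### Construction of a path from an up-step set -/

variable (S : Finset (ZMod k))

/-- Step function. -/
def stp (n : ℕ) : ℤ := if (n : ZMod k) ∈ S then 1 else -1

/-- Partial sums. -/
def pf (n : ℕ) : ℤ := ∑ m ∈ Finset.range n, stp S m

lemma pf_succ (n : ℕ) : pf S (n + 1) = pf S n + stp S n := Finset.sum_range_succ _ _

lemma pf_k (hS : 2 * S.card = k) : pf S k = 0 := by
  have h : pf S k = ∑ j : ZMod k, (if j ∈ S then (1 : ℤ) else -1) :=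
    sum_range_eq (fun j => if j ∈ S then (1 : ℤ) else -1)
  rw [h, Finset.sum_ite, Finset.sum_const, Finset.sum_const]
  have h2 : (univ.filter (fun j => j ∈ S)) = S := by
    ext x; simp
  have h3 : (univ.filter (fun j => ¬ j ∈ S)) = Sᶜ := by
    ext x; simp
  rw [h2, h3, Finset.card_compl]
  simp only [nsmul_eq_mul, mul_one, mul_neg]
  have hle : S.card ≤ Fintype.card (ZMod k) := Finset.card_le_univ S
  rw [ZMod.card] at hle ⊢
  omega

lemma stp_add_k (n : ℕ) : stp S (n + k) = stp S n := by
  have : ((n + k : ℕ) : ZMod k) = (n : ZMod k) := by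
    push_cast [ZMod.natCast_self]; ring
  simp [stp, this]

lemma pf_add_k (hS : 2 * S.card = k) (n : ℕ) : pf S (n + k) = pf S n := by
  induction n with
  | zero => simpa [pf] using pf_k S hS
  | succ n ih =>
    have h : n + 1 + k = (n + k) + 1 := by ring
    rw [h, pf_succ, ih, pf_succ, stp_add_k]

lemma pf_mod (hS : 2 * S.card = k) (n : ℕ) : pf S n = pf S (n % k) := by
  have H : ∀ t m : ℕ, pf S (m + t * k) = pf S m := by
    intro t
    induction t with
    | zero => simp
    | succ t ih =>
      intro m
      have : m + (t + 1) * k = (m + t * k) + k := by ring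
      rw [this, pf_add_k S hS, ih]
  conv_lhs => rw [← Nat.mod_add_div' n k, H]

lemma pf_val_add_one (hS : 2 * S.card = k) (j : ZMod k) :
    pf S ((j + 1).val) = pf S (j.val + 1) := by
  have h1 : (j + 1).val = (j.val + 1) % k := by
    rw [ZMod.val_add, ZMod.val_one_eq_one_mod]
    conv_rhs => rw [Nat.add_mod, Nat.mod_eq_of_lt j.val_lt]
  rw [h1, ← pf_mod S hS]

/-- The minimum of the partial sums over one period. -/
noncomputable def mn : ℤ := ((Finset.range k).image (pf S)).min' (by
  refine Finset.Nonempty.image ?_ _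
  exact Finset.nonempty_range_iff.mpr (NeZero.ne k))

lemma mn_le (j : ZMod k) : mn S ≤ pf S j.val := by
  apply Finset.min'_le
  exact Finset.mem_image_of_mem _ (Finset.mem_range.mpr j.val_lt)

lemma exists_mn : ∃ j : ZMod k, pf S j.val = mn S := by
  have hmem : mn S ∈ (Finset.range k).image (pf S) := Finset.min'_mem _ _
  obtain ⟨n, hn, hval⟩ := Finset.mem_image.mp hmem
  exact ⟨(n : ZMod k), by rw [ZMod.val_cast_of_lt (Finset.mem_range.mp hn)]; exact hval⟩

/-- The path constructed from an up-step set. -/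
noncomputable def pth : ZMod k → ℕ := fun j => (pf S j.val - mn S + 1).toNat

lemma pth_cast (j : ZMod k) : (pth S j : ℤ) = pf S j.val - mn S + 1 := by
  have := mn_le S j
  rw [pth, Int.toNat_of_nonneg (by omega)]

lemma pth_pos (j : ZMod k) : 1 ≤ pth S j := by
  have h := pth_cast S j
  have := mn_le S j
  omega

lemma pth_succ_cast (hS : 2 * S.card = k) (j : ZMod k) :
    (pth S (j + 1) : ℤ) = pf S j.val + stp S j.val - mn S + 1 := by
  rw [pth_cast, pf_val_add_one S hS, pf_succ]

lemma stp_val (j : ZMod k) : stp S j.val = if j ∈ S then (1 : ℤ) else -1 := by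
  rw [stp, ZMod.natCast_rightInverse j]

lemma pth_step (hS : 2 * S.card = k) (j : ZMod k) :
    ((pth S j : ℤ) - pth S (j + 1)).natAbs = 1 := by
  rw [pth_cast, pth_succ_cast S hS, stp_val]
  by_cases hc : j ∈ S
  · rw [if_pos hc]; omega
  · rw [if_neg hc]; omega

lemma pth_one : ∃ j, pth S j = 1 := by
  obtain ⟨j, hj⟩ := exists_mn S
  refine ⟨j, ?_⟩
  have := pth_cast S j
  rw [hj] at this
  omega

lemma pth_filter (hS : 2 * S.card = k) :
    (univ.filter (fun j => pth S j < pth S (j + 1))) = S := by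
  ext j
  simp only [Finset.mem_filter, Finset.mem_univ, true_and]
  have h1 := pth_cast S j
  have h2 := pth_succ_cast S hS j
  rw [stp_val] at h2
  by_cases hc : j ∈ S
  · rw [if_pos hc] at h2
    simp only [hc, iff_true]
    omega
  · rw [if_neg hc] at h2
    simp only [hc, iff_false, not_lt]
    omega

end ClosedPathsAux

open ClosedPathsAux in
theorem card_closed_paths (k : ℕ) [NeZero k] :
    Nat.card {i : ZMod k → ℕ //
      (∀ j, 1 ≤ i j) ∧
      (∀ j, ((i j : ℤ) - i (j + 1)).natAbs = 1) ∧
      (∃ j, i j = 1)} =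
    if Even k then k.choose (k / 2) else 0 := by
  have key : Nat.card {i : ZMod k → ℕ //
      (∀ j, 1 ≤ i j) ∧
      (∀ j, ((i j : ℤ) - i (j + 1)).natAbs = 1) ∧
      (∃ j, i j = 1)} = Nat.card {S : Finset (ZMod k) // 2 * S.card = k} := by
    apply Nat.card_congr
    refine Equiv.ofBijective
      (fun x => ⟨univ.filter (fun j => x.1 j < x.1 (j + 1)), two_mul_card x.1 x.2.2.1⟩) ⟨?_, ?_⟩
    · rintro ⟨i, h1, hs, he⟩ ⟨i', h1', hs', he'⟩ hfe
      have : ∀ j : ZMod k, i j < i (j + 1) ↔ i' j < i' (j + 1) := by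
        intro j
        have := congrArg Subtype.val hfe
        simp only at this
        constructor
        · intro hj
          have hmem : j ∈ univ.filter (fun j => i j < i (j + 1)) := by simp [hj]
          rw [this] at hmem
          simpa using hmem
        · intro hj
          have hmem : j ∈ univ.filter (fun j => i' j < i' (j + 1)) := by simp [hj]
          rw [← this] at hmem
          simpa using hmem
      exact Subtype.ext (path_eq i i' h1 hs he h1' hs' he' this)
    · rintro ⟨S, hS⟩
      refine ⟨⟨pth S, pth_pos S, pth_step S hS, pth_one S⟩, ?_⟩
      exact Subtype.ext (pth_filter S hS)
  rw [key]
  clear key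
  by_cases hk : Even k
  · rw [if_pos hk]
    obtain ⟨m, hm⟩ := hk
    have e : {S : Finset (ZMod k) // 2 * S.card = k} ≃ {S : Finset (ZMod k) // S.card = k / 2} :=
      Equiv.subtypeEquivRight (by intro S; omega)
    rw [Nat.card_congr e, Nat.card_eq_fintype_card, Fintype.card_subtype]
    have : (univ.filter (fun S : Finset (ZMod k) => S.card = k / 2))
        = (univ : Finset (ZMod k)).powersetCard (k / 2) := by
      ext S
      simp [Finset.mem_powersetCard]
    rw [this, Finset.card_powersetCard, Finset.card_univ, ZMod.card]
  · rw [if_neg hk]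
    have : IsEmpty {S : Finset (ZMod k) // 2 * S.card = k} := by
      constructor
      rintro ⟨S, hS⟩
      exact hk ⟨S.card, by omega⟩
    exact Nat.card_of_isEmpty
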